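/- R satisfies the cubic relation: for all ℏ, η, z₁, z₂, z₃ ∈ ℂ, R^ℏ_{12}(z₁−z₂) R^η_{13}(z₁−z₃) R^ℏ_{23}(z₂−z₃) − R^η_{23}(z₂−z₃) R^ℏ_{13}(z₁−z₃) R^η_{12}(z₁−z₂) = (E(ℏ) − E(η)) · R^{ℏ+η}_{13}(z₁−z₃) in Mat_N(ℂ)^{⊗3}. -/

import Mathlib

open Matrix Kronecker BigOperators

/-- The permutation operator `P₁₂ = Σ_{i,j} e_{ij} ⊗ e_{ji}` on `ℂ^N ⊗ ℂ^N`. -/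
def Perm (N : ℕ) : Matrix (Fin N × Fin N) (Fin N × Fin N) ℂ :=
  Matrix.of fun p q => if p.1 = q.2 ∧ p.2 = q.1 then 1 else 0

/-- Embedding `X ↦ X₁₂` of `Mat_N ⊗ Mat_N` into the tensor factors 1,2 of `Mat_N^{⊗3}`. -/
def e12 {N : ℕ} (X : Matrix (Fin N × Fin N) (Fin N × Fin N) ℂ) :
    Matrix (Fin N × Fin N × Fin N) (Fin N × Fin N × Fin N) ℂ :=
  Matrix.of fun p q =>
    X (p.1, p.2.1) (q.1, q.2.1) * (if p.2.2 = q.2.2 then (1 : ℂ) else 0)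

/-- Embedding `X ↦ X₁₃` of `Mat_N ⊗ Mat_N` into the tensor factors 1,3 of `Mat_N^{⊗3}`. -/
def e13 {N : ℕ} (X : Matrix (Fin N × Fin N) (Fin N × Fin N) ℂ) :
    Matrix (Fin N × Fin N × Fin N) (Fin N × Fin N × Fin N) ℂ :=
  Matrix.of fun p q =>
    X (p.1, p.2.2) (q.1, q.2.2) * (if p.2.1 = q.2.1 then (1 : ℂ) else 0)

/-- Embedding `X ↦ X₂₃` of `Mat_N ⊗ Mat_N` into the tensor factors 2,3 of `Mat_N^{⊗3}`. -/
def e23 {N : ℕ} (X : Matrix (Fin N × Fin N) (Fin N × Fin N) ℂ) :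
    Matrix (Fin N × Fin N × Fin N) (Fin N × Fin N × Fin N) ℂ :=
  Matrix.of fun p q =>
    X (p.2.1, p.2.2) (q.2.1, q.2.2) * (if p.1 = q.1 then (1 : ℂ) else 0)


section Aux
open Matrix
variable {N : ℕ}

private lemma Perm_mul_Perm : Perm N * Perm N = 1 := by
  ext ⟨i,j⟩ ⟨k,l⟩
  simp [Perm, Matrix.mul_apply, Fintype.sum_prod_type, one_apply, Prod.ext_iff,
    ite_and, eq_comm]

private lemma e12_mul (X Y : Matrix (Fin N × Fin N) (Fin N × Fin N) ℂ) :
    e12 (X * Y) = e12 X * e12 Y := by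
  ext ⟨i,j,k⟩ ⟨i',j',k'⟩
  simp [e12, Matrix.mul_apply, Fintype.sum_prod_type, mul_ite, ite_mul,
    Finset.mul_sum, Finset.sum_mul]

private lemma e13_mul (X Y : Matrix (Fin N × Fin N) (Fin N × Fin N) ℂ) :
    e13 (X * Y) = e13 X * e13 Y := by
  ext ⟨i,j,k⟩ ⟨i',j',k'⟩
  simp [e13, Matrix.mul_apply, Fintype.sum_prod_type, mul_ite, ite_mul,
    Finset.mul_sum, Finset.sum_mul]

private lemma e23_mul (X Y : Matrix (Fin N × Fin N) (Fin N × Fin N) ℂ) :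
    e23 (X * Y) = e23 X * e23 Y := by
  ext ⟨i,j,k⟩ ⟨i',j',k'⟩
  simp [e23, Matrix.mul_apply, Fintype.sum_prod_type, mul_ite, ite_mul,
    Finset.mul_sum, Finset.sum_mul]

private lemma e12_one : e12 (1 : Matrix (Fin N × Fin N) (Fin N × Fin N) ℂ) = 1 := by
  ext ⟨i,j,k⟩ ⟨i',j',k'⟩
  simp only [e12, of_apply, one_apply, Prod.ext_iff, ite_and]
  split_ifs <;> simp_all

private lemma e23_one : e23 (1 : Matrix (Fin N × Fin N) (Fin N × Fin N) ℂ) = 1 := by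
  ext ⟨i,j,k⟩ ⟨i',j',k'⟩
  simp only [e23, of_apply, one_apply, Prod.ext_iff, ite_and]
  split_ifs <;> simp_all

private lemma e23_smul (c : ℂ) (X : Matrix (Fin N × Fin N) (Fin N × Fin N) ℂ) :
    e23 (c • X) = c • e23 X := by
  ext p q; simp [e23, mul_assoc]

private lemma e12_neg (X : Matrix (Fin N × Fin N) (Fin N × Fin N) ℂ) :
    e12 (-X) = -e12 X := by
  ext p q
  simp only [e12, of_apply, Matrix.neg_apply, neg_mul]

private lemma conj_e13 (X : Matrix (Fin N × Fin N) (Fin N × Fin N) ℂ) :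
    e12 (Perm N) * e13 X * e12 (Perm N) = e23 X := by
  ext ⟨i,j,k⟩ ⟨i',j',k'⟩
  simp [e12, e13, e23, Perm, Matrix.mul_apply, Fintype.sum_prod_type, mul_ite, ite_mul,
    Finset.mul_sum, Finset.sum_mul, ite_and, Prod.ext_iff, eq_comm]

private lemma conj_e23 (X : Matrix (Fin N × Fin N) (Fin N × Fin N) ℂ) :
    e12 (Perm N) * e23 X * e12 (Perm N) = e13 X := by
  ext ⟨i,j,k⟩ ⟨i',j',k'⟩
  simp [e12, e13, e23, Perm, Matrix.mul_apply, Fintype.sum_prod_type, mul_ite, ite_mul,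
    Finset.mul_sum, Finset.sum_mul, ite_and, Prod.ext_iff, eq_comm]

private lemma CRconj_mul {M : Type*} [Ring M] (Q A B : M) (hQ : Q * Q = 1) :
    Q * (A * B) * Q = (Q * A * Q) * (Q * B * Q) := by
  rw [show (Q*A*Q)*(Q*B*Q) = Q*A*(Q*Q)*(B*Q) from by noncomm_ring, hQ]
  noncomm_ring

end Aux

/-- The cubic relation for a unitary skew-symmetric solution of the associative
Yang–Baxter equation. -/
theorem cubic_relation (N : ℕ) (hN : 1 ≤ N)
    (R : ℂ → ℂ → Matrix (Fin N × Fin N) (Fin N × Fin N) ℂ) (E : ℂ → ℂ)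
    (hAYBE : ∀ ℏ η z₁ z₂ z₃ : ℂ,
      e12 (R ℏ (z₁ - z₂)) * e23 (R η (z₂ - z₃)) =
        e13 (R η (z₁ - z₃)) * e12 (R (ℏ - η) (z₁ - z₂)) +
          e23 (R (η - ℏ) (z₂ - z₃)) * e13 (R ℏ (z₁ - z₃)))
    (hskew : ∀ ℏ z : ℂ, R ℏ z = -(Perm N * R (-ℏ) (-z) * Perm N))
    (hunit : ∀ ℏ z : ℂ, R ℏ z * (Perm N * R ℏ (-z) * Perm N) =
      (E ℏ - E z) • (1 : Matrix (Fin N × Fin N) (Fin N × Fin N) ℂ))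
    (ℏ η z₁ z₂ z₃ : ℂ) :
    e12 (R ℏ (z₁ - z₂)) * e13 (R η (z₁ - z₃)) * e23 (R ℏ (z₂ - z₃)) -
        e23 (R η (z₂ - z₃)) * e13 (R ℏ (z₁ - z₃)) * e12 (R η (z₁ - z₂)) =
      (E ℏ - E η) • e13 (R (ℏ + η) (z₁ - z₃)) := by
  -- Abbreviations
  set P := Perm N with hPdef
  -- skew symmetry, rearranged
  have hP : ∀ a w : ℂ, P * R a w * P = -R (-a) (-w) := by
    intro a w
    have h := hskew (-a) (-w)
    rw [neg_neg, neg_neg] at h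
    rw [h, neg_neg]
  -- unitarity, rearranged:  R a w * R (-a) w = (E w - E a) • 1
  have U1 : ∀ a w : ℂ, R a w * R (-a) w = (E w - E a) • 1 := by
    intro a w
    have h := hunit a w
    rw [hP a (-w), neg_neg, mul_neg] at h
    have h2 : R a w * R (-a) w = -((E a - E w) • 1) := by
      rw [← h, neg_neg]
    rw [h2, ← neg_smul]
    ring_nf
  -- E is even
  have hEeven : ∀ a : ℂ, E (-a) = E a := by
    have hscal : ∀ a w : ℂ, E w - E (-a) = E (-w) - E a := by
      intro a w
      have h1 := U1 a (-w)
      have hc := congrArg (fun M => P * M * P) h1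
      rw [CRconj_mul P _ _ Perm_mul_Perm, hP a (-w), hP (-a) (-w), neg_neg, neg_neg,
        neg_mul_neg] at hc
      have hrhs : P * ((E (-w) - E a) • (1 : Matrix (Fin N × Fin N) (Fin N × Fin N) ℂ)) * P
          = (E (-w) - E a) • (1 : Matrix (Fin N × Fin N) (Fin N × Fin N) ℂ) := by
        rw [mul_smul_comm, smul_mul_assoc, mul_one, hPdef, Perm_mul_Perm]
      rw [hrhs] at hc
      have hU : R (-a) w * R a w = (E w - E (-a)) • 1 := by
        have h := U1 (-a) w; rwa [neg_neg] at h
      rw [hU] at hc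
      have i0 : Fin N := ⟨0, hN⟩
      have he := congrFun (congrFun hc (i0, i0)) (i0, i0)
      simpa using he
    intro a
    have h := hscal a a
    linear_combination (-(1:ℂ)/2) * h
  -- other form of unitarity
  have U2 : ∀ a w : ℂ, R (-a) w * R a w = (E w - E a) • 1 := by
    intro a w
    have h := U1 (-a) w
    rw [neg_neg, hEeven a] at h
    exact h
  -- Conjugation by Q = e12 (Perm N)
  set Q : Matrix (Fin N × Fin N × Fin N) (Fin N × Fin N × Fin N) ℂ := e12 (Perm N) with hQdef
  have hQ2 : Q * Q = 1 := by rw [hQdef, ← e12_mul, Perm_mul_Perm, e12_one]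
  have ce12 : ∀ a w : ℂ, Q * e12 (R a w) * Q = -(e12 (R (-a) (-w))) := by
    intro a w
    rw [hQdef, ← e12_mul, ← e12_mul, hP a w, e12_neg]
  -- the key permuted AYBE identity
  have hab : e12 (R ℏ (z₁ - z₂)) * e13 (R η (z₁ - z₃)) =
      e23 (R η (z₂ - z₃)) * e12 (R (ℏ + η) (z₁ - z₂)) -
        e13 (R (ℏ + η) (z₁ - z₃)) * e23 (R (-ℏ) (z₂ - z₃)) := by
    have key := hAYBE (-ℏ) η z₂ z₁ z₃
    have ha1 : -ℏ - η = -(ℏ + η) := by ring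
    have ha2 : η - -ℏ = ℏ + η := by ring
    rw [ha1, ha2] at key
    have hc := congrArg (fun M => Q * M * Q) key
    simp only [mul_add, add_mul] at hc
    rw [CRconj_mul Q _ _ hQ2, CRconj_mul Q _ _ hQ2, CRconj_mul Q _ _ hQ2,
      ce12 (-ℏ) (z₂ - z₁), ce12 (-(ℏ + η)) (z₂ - z₁), neg_neg, neg_neg, neg_sub] at hc
    rw [hQdef] at hc
    simp only [conj_e13, conj_e23] at hc
    rw [neg_mul, mul_neg] at hc
    apply neg_injective
    rw [hc]
    noncomm_ring
  -- AYBE instance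
  have h2 : e12 (R (ℏ + η) (z₁ - z₂)) * e23 (R ℏ (z₂ - z₃)) =
      e13 (R ℏ (z₁ - z₃)) * e12 (R η (z₁ - z₂)) +
        e23 (R (-η) (z₂ - z₃)) * e13 (R (ℏ + η) (z₁ - z₃)) := by
    have key := hAYBE (ℏ + η) ℏ z₁ z₂ z₃
    have ha1 : ℏ + η - ℏ = η := by ring
    have ha2 : ℏ - (ℏ + η) = -η := by ring
    rw [ha1, ha2] at key
    exact key
  -- unitarity embedded in factors 2,3
  have h3 : e23 (R (-ℏ) (z₂ - z₃)) * e23 (R ℏ (z₂ - z₃)) =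
      (E (z₂ - z₃) - E ℏ) • (1 : Matrix (Fin N × Fin N × Fin N) (Fin N × Fin N × Fin N) ℂ) := by
    rw [← e23_mul, U2 ℏ (z₂ - z₃), e23_smul, e23_one]
  have h4 : e23 (R η (z₂ - z₃)) * e23 (R (-η) (z₂ - z₃)) =
      (E (z₂ - z₃) - E η) • (1 : Matrix (Fin N × Fin N × Fin N) (Fin N × Fin N × Fin N) ℂ) := by
    rw [← e23_mul, U1 η (z₂ - z₃), e23_smul, e23_one]
  -- main computation
  have key : e12 (R ℏ (z₁ - z₂)) * e13 (R η (z₁ - z₃)) * e23 (R ℏ (z₂ - z₃)) =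
      e23 (R η (z₂ - z₃)) * e13 (R ℏ (z₁ - z₃)) * e12 (R η (z₁ - z₂)) +
        (E ℏ - E η) • e13 (R (ℏ + η) (z₁ - z₃)) := by
    calc e12 (R ℏ (z₁ - z₂)) * e13 (R η (z₁ - z₃)) * e23 (R ℏ (z₂ - z₃))
        = e23 (R η (z₂ - z₃)) * (e12 (R (ℏ + η) (z₁ - z₂)) * e23 (R ℏ (z₂ - z₃))) -
            e13 (R (ℏ + η) (z₁ - z₃)) *
              (e23 (R (-ℏ) (z₂ - z₃)) * e23 (R ℏ (z₂ - z₃))) := by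
          rw [hab]; noncomm_ring
      _ = e23 (R η (z₂ - z₃)) *
            (e13 (R ℏ (z₁ - z₃)) * e12 (R η (z₁ - z₂)) +
              e23 (R (-η) (z₂ - z₃)) * e13 (R (ℏ + η) (z₁ - z₃))) -
            e13 (R (ℏ + η) (z₁ - z₃)) * ((E (z₂ - z₃) - E ℏ) • 1) := by
          rw [h2, h3]
      _ = e23 (R η (z₂ - z₃)) * e13 (R ℏ (z₁ - z₃)) * e12 (R η (z₁ - z₂)) +
            (e23 (R η (z₂ - z₃)) * e23 (R (-η) (z₂ - z₃))) * e13 (R (ℏ + η) (z₁ - z₃)) -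
            (E (z₂ - z₃) - E ℏ) • e13 (R (ℏ + η) (z₁ - z₃)) := by
          rw [mul_smul_comm, mul_one]; noncomm_ring
      _ = e23 (R η (z₂ - z₃)) * e13 (R ℏ (z₁ - z₃)) * e12 (R η (z₁ - z₂)) +
            (E (z₂ - z₃) - E η) • e13 (R (ℏ + η) (z₁ - z₃)) -
            (E (z₂ - z₃) - E ℏ) • e13 (R (ℏ + η) (z₁ - z₃)) := by
          rw [h4, smul_mul_assoc, one_mul]
      _ = e23 (R η (z₂ - z₃)) * e13 (R ℏ (z₁ - z₃)) * e12 (R η (z₁ - z₂)) +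
            (E ℏ - E η) • e13 (R (ℏ + η) (z₁ - z₃)) := by
          rw [add_sub_assoc, ← sub_smul,
            show E (z₂ - z₃) - E η - (E (z₂ - z₃) - E ℏ) = E ℏ - E η from by ring]
  rw [key, add_sub_cancel_left]
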